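/- (Consensus duality.) Let A : Matrix (Fin n) (Fin E) ℝ be an oriented incidence matrix of a graph with n nodes and E edges: for each ℓ : Fin E there are distinct i(ℓ), j(ℓ) : Fin n with A_{i(ℓ),ℓ} = 1, A_{j(ℓ),ℓ} = −1, and all other entries of column ℓ equal to 0. For each i : Fin n let f_i : ℝ → ℝ be convex and μ_i-strongly convex with μ_i > 0, and let f_i*(y) = ⨆_{x : ℝ} (y·x − f_i(x)) be its Fenchel conjugate. Then sInf { Σ_i f_i(θ i) : θ : Fin n → ℝ, Aᵀ.mulVec θ = 0 } = − sInf { Σ_i f_i*((A.mulVec λ)_i) : λ : Fin E → ℝ }, i.e. strong duality holds between the consensus-constrained primal problem and the dual problem in the edge variables. -/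

import Mathlib

open Set

noncomputable def sl (f : ℝ → ℝ) (t x : ℝ) : ℝ := (f x - f t) / (x - t)

noncomputable def ld (f : ℝ → ℝ) (t : ℝ) : ℝ := sSup (sl f t '' Iio t)
noncomputable def rd (f : ℝ → ℝ) (t : ℝ) : ℝ := sInf (sl f t '' Ioi t)

variable {f : ℝ → ℝ} {t : ℝ}

lemma sl_mono (hf : ConvexOn ℝ univ f) {x y : ℝ} (hx : x ≠ t) (hy : y ≠ t) (hxy : x ≤ y) :
    sl f t x ≤ sl f t y :=
  hf.secant_mono trivial trivial trivial hx hy hxy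

lemma ldSet_ne : (sl f t '' Iio t).Nonempty := ⟨_, ⟨t - 1, by norm_num, rfl⟩⟩

lemma rdSet_ne : (sl f t '' Ioi t).Nonempty := ⟨_, ⟨t + 1, by norm_num, rfl⟩⟩

lemma ldSet_bdd (hf : ConvexOn ℝ univ f) : BddAbove (sl f t '' Iio t) := by
  refine ⟨sl f t (t + 1), ?_⟩
  rintro s ⟨x, hx, rfl⟩
  exact sl_mono hf (ne_of_lt hx) (by norm_num) (by linarith [mem_Iio.mp hx])

lemma rdSet_bdd (hf : ConvexOn ℝ univ f) : BddBelow (sl f t '' Ioi t) := by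
  refine ⟨sl f t (t - 1), ?_⟩
  rintro s ⟨x, hx, rfl⟩
  exact sl_mono hf (by norm_num) (ne_of_gt hx) (by linarith [mem_Ioi.mp hx])

lemma sl_le_ld (hf : ConvexOn ℝ univ f) {x : ℝ} (hx : x < t) : sl f t x ≤ ld f t :=
  le_csSup (ldSet_bdd hf) ⟨x, hx, rfl⟩

lemma rd_le_sl (hf : ConvexOn ℝ univ f) {x : ℝ} (hx : t < x) : rd f t ≤ sl f t x :=
  csInf_le (rdSet_bdd hf) ⟨x, hx, rfl⟩

lemma ld_le_sl (hf : ConvexOn ℝ univ f) {y : ℝ} (hy : t < y) : ld f t ≤ sl f t y := by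
  refine csSup_le ldSet_ne ?_
  rintro s ⟨x, hx, rfl⟩
  exact sl_mono hf (ne_of_lt hx) (ne_of_gt hy) (by linarith [mem_Iio.mp hx])

lemma sl_le_rd (hf : ConvexOn ℝ univ f) {x : ℝ} (hx : x < t) : sl f t x ≤ rd f t := by
  refine le_csInf rdSet_ne ?_
  rintro s ⟨y, hy, rfl⟩
  exact sl_mono hf (ne_of_lt hx) (ne_of_gt hy) (by linarith [mem_Ioi.mp hy])

lemma ld_le_rd (hf : ConvexOn ℝ univ f) : ld f t ≤ rd f t := by
  refine le_csInf rdSet_ne ?_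
  rintro s ⟨y, hy, rfl⟩
  exact ld_le_sl hf hy

lemma subgrad (hf : ConvexOn ℝ univ f) {g : ℝ} (h1 : ld f t ≤ g) (h2 : g ≤ rd f t) (x : ℝ) :
    f t + g * (x - t) ≤ f x := by
  rcases lt_trichotomy x t with h | rfl | h
  · have hs : sl f t x ≤ g := (sl_le_ld hf h).trans h1
    rw [sl, div_le_iff_of_neg (by linarith)] at hs
    linarith
  · simp
  · have hs : g ≤ sl f t x := h2.trans (rd_le_sl hf h)
    rw [sl, le_div_iff₀ (by linarith)] at hs
    linarith

lemma strong_lb {μ : ℝ} (hμ : 0 < μ) (hs : ConvexOn ℝ univ fun x => f x - μ / 2 * x ^ 2) :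
    ∃ s : ℝ, ∀ x, f 0 + s * x + μ / 2 * x ^ 2 ≤ f x := by
  refine ⟨ld (fun x => f x - μ / 2 * x ^ 2) 0, fun x => ?_⟩
  have := subgrad hs (le_refl (ld (fun x => f x - μ / 2 * x ^ 2) 0)) (ld_le_rd hs) x
  simp only [sub_zero] at this
  nlinarith [this]

lemma q_eq (f : ℝ → ℝ) {θ d t : ℝ} (ht : t ≠ 0) (hd : d ≠ 0) :
    (f (θ + t * d) - f θ) / t = d * sl f θ (θ + t * d) := by
  rw [sl, add_sub_cancel_left]; field_simp

lemma q_eq' (f : ℝ → ℝ) {θ x d : ℝ} (hx : x - θ ≠ 0) (hd : d ≠ 0) :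
    (f x - f θ) / ((x - θ) / d) = d * sl f θ x := by
  rw [sl]; field_simp

lemma conj_bdd {μ : ℝ} (hμ : 0 < μ) (hs : ConvexOn ℝ univ fun x => f x - μ / 2 * x ^ 2)
    (y : ℝ) : BddAbove (Set.range fun x => y * x - f x) := by
  obtain ⟨s, hlb⟩ := strong_lb hμ hs
  refine ⟨(y - s) ^ 2 / (2 * μ) - f 0, ?_⟩
  rintro v ⟨x, rfl⟩
  have h1 := hlb x
  have h2 : 0 ≤ (μ * x - (y - s)) ^ 2 := sq_nonneg _
  have h3 : (0:ℝ) < 2 * μ := by linarith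
  have h4 : (μ * x - (y - s)) ^ 2 / (2 * μ)
      = (y - s) ^ 2 / (2 * μ) - (y - s) * x + μ / 2 * x ^ 2 := by
    field_simp; ring
  have h5 := div_nonneg h2 h3.le
  rw [h4] at h5
  show y * x - f x ≤ (y - s) ^ 2 / (2 * μ) - f 0
  linarith

lemma q_mono (hf : ConvexOn ℝ univ f) (θ d : ℝ) {t t' : ℝ} (ht' : 0 < t') (h : t' ≤ t) :
    (f (θ + t' * d) - f θ) / t' ≤ (f (θ + t * d) - f θ) / t := by
  have ht : 0 < t := lt_of_lt_of_le ht' h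
  rcases lt_trichotomy d 0 with hd | rfl | hd
  · rw [q_eq f ht'.ne' hd.ne, q_eq f ht.ne' hd.ne]
    have hsl : sl f θ (θ + t * d) ≤ sl f θ (θ + t' * d) :=
      sl_mono hf (by nlinarith) (by nlinarith) (by nlinarith)
    exact mul_le_mul_of_nonpos_left hsl hd.le
  · simp
  · rw [q_eq f ht'.ne' hd.ne', q_eq f ht.ne' hd.ne']
    have hsl : sl f θ (θ + t' * d) ≤ sl f θ (θ + t * d) :=
      sl_mono hf (by nlinarith) (by nlinarith) (by nlinarith)
    exact mul_le_mul_of_nonneg_left hsl hd.le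

lemma q_approx (hf : ConvexOn ℝ univ f) (θ d : ℝ) {ε : ℝ} (hε : 0 < ε) :
    ∃ t, 0 < t ∧ (f (θ + t * d) - f θ) / t
      ≤ (if 0 ≤ d then rd f θ else ld f θ) * d + ε := by
  rcases lt_trichotomy d 0 with hd | rfl | hd
  · rw [if_neg (not_le.mpr hd)]
    have hεd : 0 < ε / (-d) := div_pos hε (by linarith)
    obtain ⟨v, ⟨x, hx, rfl⟩, hv⟩ :=
      exists_lt_of_lt_csSup (ldSet_ne (f := f) (t := θ))
        (show ld f θ - ε / (-d) < ld f θ by linarith)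
    have hxθ : x < θ := hx
    refine ⟨(x - θ) / d, div_pos_of_neg_of_neg (by linarith) hd, ?_⟩
    have hxe : θ + (x - θ) / d * d = x := by field_simp [hd.ne]; ring
    rw [hxe, q_eq' f (by intro h; apply hxθ.ne; linarith [sub_eq_zero.mp h]) hd.ne]
    have h6 := mul_le_mul_of_nonpos_left hv.le hd.le
    have hde : d * (ε / -d) = -ε := by field_simp [hd.ne]
    rw [mul_sub, hde] at h6
    linarith
  · exact ⟨1, one_pos, by simp [hε.le]⟩
  · rw [if_pos hd.le]
    have hεd : 0 < ε / d := div_pos hε hd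
    obtain ⟨v, ⟨x, hx, rfl⟩, hv⟩ :=
      exists_lt_of_csInf_lt (rdSet_ne (f := f) (t := θ))
        (show rd f θ < rd f θ + ε / d by linarith)
    have hxθ : θ < x := hx
    refine ⟨(x - θ) / d, div_pos (by linarith) hd, ?_⟩
    have hxe : θ + (x - θ) / d * d = x := by field_simp [hd.ne']; ring
    rw [hxe, q_eq' f (by intro h; apply hxθ.ne'; linarith [sub_eq_zero.mp h]) hd.ne']
    have h6 := mul_le_mul_of_nonneg_left hv.le hd.le
    have hde : d * (ε / d) = ε := by field_simp [hd.ne']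
    rw [mul_add, hde] at h6
    linarith

open Matrix Set

local notation "⟪" x ", " y "⟫" => @inner ℝ _ _ x y

lemma euc_inner {n : ℕ} (x y : EuclideanSpace ℝ (Fin n)) : ⟪x, y⟫ = ∑ i, x i * y i := by
  simp [PiLp.inner_apply, RCLike.inner_apply, conj_trivial, mul_comm]

lemma dot_transfer {n E : ℕ} (A : Matrix (Fin n) (Fin E) ℝ) (lam : Fin E → ℝ) (u : Fin n → ℝ) :
    (A.mulVec lam) ⬝ᵥ u = lam ⬝ᵥ (Aᵀ.mulVec u) := by
  have h1 : u ᵥ* A = Aᵀ *ᵥ u := by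
    rw [← transpose_transpose A, vecMul_transpose, transpose_transpose]
  rw [dotProduct_comm, dotProduct_mulVec, h1, dotProduct_comm]

lemma mem_range_of_orth {n E : ℕ} (A : Matrix (Fin n) (Fin E) ℝ) (g : Fin n → ℝ)
    (h : ∀ θ : Fin n → ℝ, Aᵀ.mulVec θ = 0 → g ⬝ᵥ θ = 0) : ∃ lam, A.mulVec lam = g := by
  classical
  set e := (WithLp.linearEquiv 2 ℝ (Fin n → ℝ)) with he
  set L : (Fin E → ℝ) →ₗ[ℝ] EuclideanSpace ℝ (Fin n) :=
    e.symm.toLinearMap ∘ₗ A.mulVecLin with hL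
  set V := LinearMap.range L with hV
  have hVorth : ∀ u : EuclideanSpace ℝ (Fin n), u ∈ Vᗮ → Aᵀ.mulVec (e u) = 0 := by
    intro u hu
    have h0 : ∀ lam : Fin E → ℝ, (A.mulVec lam) ⬝ᵥ (e u) = 0 := by
      intro lam
      have := hu (L lam) ⟨lam, rfl⟩
      rw [euc_inner] at this
      rw [← this, dotProduct]
      refine Finset.sum_congr rfl fun i _ => ?_
      simp [hL, he, WithLp.linearEquiv, WithLp.equiv_symm_apply]
    have := h0 (Aᵀ.mulVec (e u))
    rwa [dot_transfer, dotProduct_self_eq_zero] at this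
  have hg : e.symm g ∈ Vᗮᗮ := by
    rw [Submodule.mem_orthogonal]
    intro u hu
    rw [euc_inner]
    have h2 := h (e u) (hVorth u hu)
    rw [dotProduct_comm] at h2
    rw [← h2, dotProduct]
    refine Finset.sum_congr rfl fun i _ => ?_
    simp [he, WithLp.linearEquiv, WithLp.equiv_symm_apply, WithLp.equiv_apply]
  rw [Submodule.orthogonal_orthogonal] at hg
  obtain ⟨lam, hlam⟩ := hg
  refine ⟨lam, ?_⟩
  have := congrArg e hlam
  simp only [hL, LinearMap.coe_comp, Function.comp_apply, LinearEquiv.coe_coe,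
    LinearEquiv.apply_symm_apply] at this
  exact this

lemma box_orth {n : ℕ} (B : Set (EuclideanSpace ℝ (Fin n))) (hBc : Convex ℝ B)
    (hBk : IsCompact B) (K : Submodule ℝ (EuclideanSpace ℝ (Fin n)))
    (H : ∀ d ∈ K, ∃ g ∈ B, 0 ≤ ⟪g, d⟫) :
    ∃ g ∈ B, ∀ w ∈ K, ⟪g, w⟫ = 0 := by
  set P := K.orthogonalProjectionOnto with hP
  by_cases h0 : (0 : K) ∈ (fun v => P v) '' B
  · obtain ⟨g, hg, hPg⟩ := h0
    refine ⟨g, hg, fun w hw => ?_⟩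
    have hgo : g ∈ Kᗮ := Submodule.orthogonalProjectionOnto_eq_zero_iff.mp hPg
    rw [real_inner_comm]
    exact (Submodule.mem_orthogonal K g).mp hgo w hw
  · exfalso
    have hCc : Convex ℝ ((fun v => P v) '' B) := hBc.linear_image (P : _ →ₗ[ℝ] K)
    have hCk : IsCompact ((fun v => P v) '' B) := hBk.image P.continuous
    obtain ⟨φ, u, hu0, hu⟩ := geometric_hahn_banach_point_closed hCc hCk.isClosed h0
    set d := (InnerProductSpace.toDual ℝ K).symm φ with hd
    obtain ⟨g, hg, hgd⟩ := H (-(d : EuclideanSpace ℝ (Fin n))) (K.neg_mem d.2)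
    rw [inner_neg_right] at hgd
    have h1 : ⟪g, (d : EuclideanSpace ℝ (Fin n))⟫ ≤ 0 := by linarith
    have h2 : ⟪g, (d : EuclideanSpace ℝ (Fin n))⟫ = φ (P g) := by
      have hsub : ⟪g - (P g : EuclideanSpace ℝ (Fin n)), (d : EuclideanSpace ℝ (Fin n))⟫ = 0 := by
        rw [real_inner_comm]
        exact (Submodule.mem_orthogonal K _).mp (Submodule.sub_starProjection_mem_orthogonal g) _ d.2
      have : ⟪g, (d : EuclideanSpace ℝ (Fin n))⟫
          = ⟪(P g : EuclideanSpace ℝ (Fin n)), (d : EuclideanSpace ℝ (Fin n))⟫ := by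
        rw [inner_sub_left] at hsub; linarith
      rw [this, ← Submodule.coe_inner, real_inner_comm]
      exact InnerProductSpace.toDual_symm_apply
    have h3 : u < φ (P g) := hu _ ⟨g, hg, rfl⟩
    have h4 : φ 0 = 0 := map_zero φ
    rw [h4] at hu0
    rw [h2] at h1
    linarith

/-- Consensus duality: strong duality between the consensus-constrained
primal problem `inf { Σᵢ fᵢ(θᵢ) : Aᵀ θ = 0 }` and the dual problem
`-inf_λ Σᵢ fᵢ*((A λ)ᵢ)` in the edge variables, for an oriented incidence matrix `A` of a
graph and convex, strongly convex local functions `fᵢ`. -/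
theorem stmt15 (n E : ℕ)
    (A : Matrix (Fin n) (Fin E) ℝ)
    (hA : ∀ ℓ : Fin E, ∃ i j : Fin n, i ≠ j ∧ A i ℓ = 1 ∧ A j ℓ = -1 ∧
      ∀ k : Fin n, k ≠ i → k ≠ j → A k ℓ = 0)
    (f : Fin n → ℝ → ℝ) (μ : Fin n → ℝ) (hμ : ∀ i, 0 < μ i)
    (hconv : ∀ i, ConvexOn ℝ Set.univ (f i))
    (hstrong : ∀ i, ConvexOn ℝ Set.univ (fun x => f i x - (μ i / 2) * x ^ 2)) :
    sInf {v : ℝ | ∃ θ : Fin n → ℝ, Aᵀ.mulVec θ = 0 ∧ v = ∑ i, f i (θ i)}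
      = - sInf {v : ℝ | ∃ lam : Fin E → ℝ,
          v = ∑ i, ⨆ x : ℝ, (A.mulVec lam i * x - f i x)} := by
  classical
  set F : (Fin n → ℝ) → ℝ := fun θ => ∑ i, f i (θ i) with hF
  -- quadratic lower bounds from strong convexity
  choose s hqb using fun i => strong_lb (hμ i) (hstrong i)
  set c : Fin n → ℝ := fun j => f j 0 - (s j) ^ 2 / (2 * μ j) with hc
  have hlow : ∀ j x, c j ≤ f j x := by
    intro j x
    have h := hqb j x
    have h2 : 0 ≤ (μ j * x + s j) ^ 2 := sq_nonneg _
    have h3 : (0:ℝ) < 2 * μ j := by linarith [hμ j]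
    have h4 : (μ j * x + s j) ^ 2 / (2 * μ j)
        = (s j) ^ 2 / (2 * μ j) + s j * x + μ j / 2 * x ^ 2 := by
      field_simp [(hμ j).ne']; ring
    have h5 := div_nonneg h2 h3.le
    rw [h4] at h5
    have : c j = f j 0 - (s j) ^ 2 / (2 * μ j) := by rw [hc]
    rw [this]
    linarith
  -- continuity
  have hfc : ∀ i, Continuous (f i) := fun i =>
    continuousOn_univ.mp ((hconv i).continuousOn isOpen_univ)
  have hFc : Continuous F := continuous_finset_sum _ fun i _ => (hfc i).comp (continuous_apply i)
  -- the constrained sublevel set is compact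
  set M : ℝ := F 0 + ∑ j, |c j| with hM
  set R : Fin n → ℝ := fun i => (2 * |s i| + 2 * |M - f i 0| + 2) / (μ i) + 1 with hR
  set S : Set (Fin n → ℝ) := {θ | Aᵀ.mulVec θ = 0 ∧ F θ ≤ F 0} with hS
  have h0S : (0 : Fin n → ℝ) ∈ S := ⟨Matrix.mulVec_zero _, le_refl _⟩
  have hSclosed : IsClosed S := by
    have hcm : Continuous fun θ : Fin n → ℝ => Aᵀ.mulVec θ := by
      refine continuous_pi fun e => ?_
      simp only [Matrix.mulVec, dotProduct]
      exact continuous_finset_sum _ fun j _ => continuous_const.mul (continuous_apply j)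
    exact (isClosed_eq hcm continuous_const).inter (isClosed_le hFc continuous_const)
  have hbound : ∀ θ ∈ S, ∀ i, θ i ∈ Set.Icc (-(R i)) (R i) := by
    intro θ hθ i
    have hkey : μ i / 2 * (θ i) ^ 2 + s i * (θ i) + f i 0 ≤ M := by
      have h1 : F θ ≤ F 0 := hθ.2
      have h2 : ∑ j ∈ Finset.univ.erase i, c j ≤ ∑ j ∈ Finset.univ.erase i, f j (θ j) :=
        Finset.sum_le_sum fun j _ => hlow j (θ j)
      have h3 : f i (θ i) + ∑ j ∈ Finset.univ.erase i, f j (θ j) = F θ := by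
        rw [hF]
        exact Finset.add_sum_erase _ (fun j => f j (θ j)) (Finset.mem_univ i)
      have h4 : -∑ j ∈ Finset.univ.erase i, c j ≤ ∑ j, |c j| := by
        calc -∑ j ∈ Finset.univ.erase i, c j ≤ ∑ j ∈ Finset.univ.erase i, |c j| := by
              rw [← Finset.sum_neg_distrib]
              exact Finset.sum_le_sum fun j _ => neg_le_abs _
          _ ≤ ∑ j, |c j| :=
              Finset.sum_le_sum_of_subset_of_nonneg (Finset.erase_subset _ _)
                (fun j _ _ => abs_nonneg _)
      have h6 : f i (θ i) ≤ M := by rw [hM]; linarith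
      linarith [hqb i (θ i)]
    have hRpos : 0 < (2 * |s i| + 2 * |M - f i 0| + 2) / μ i := div_pos (by positivity) (hμ i)
    have hmR : μ i / 2 * R i = |s i| + |M - f i 0| + 1 + μ i / 2 := by
      rw [hR]
      field_simp [(hμ i).ne']
    have h7 : 1 < R i := by rw [hR]; simp only []; linarith
    constructor
    · by_contra hcon
      push_neg at hcon
      have e1 : μ i / 2 * R i * (-(θ i)) ≤ μ i / 2 * (θ i) ^ 2 := by
        nlinarith [mul_nonneg (mul_nonneg (by linarith [hμ i] : (0:ℝ) ≤ μ i / 2)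
          (by linarith : (0:ℝ) ≤ -(θ i) - R i)) (by linarith : (0:ℝ) ≤ -(θ i))]
      have e2 : (|s i| + |M - f i 0| + 1 + μ i / 2) * (-(θ i)) ≤ μ i / 2 * (θ i) ^ 2 := by
        rw [← hmR]; exact e1
      have hint1 : 0 ≤ (|s i| - s i) * (-(θ i)) :=
        mul_nonneg (by linarith [le_abs_self (s i)]) (by linarith)
      have hint2 : 0 ≤ (-(θ i) - 1) * (|M - f i 0| + 1 + μ i / 2) :=
        mul_nonneg (by linarith) (by linarith [abs_nonneg (M - f i 0), hμ i])
      nlinarith [hkey, e2, hint1, hint2, le_abs_self (M - f i 0), hμ i]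
    · by_contra hcon
      push_neg at hcon
      have e1 : μ i / 2 * R i * (θ i) ≤ μ i / 2 * (θ i) ^ 2 := by
        nlinarith [mul_nonneg (mul_nonneg (by linarith [hμ i] : (0:ℝ) ≤ μ i / 2)
          (by linarith : (0:ℝ) ≤ θ i - R i)) (by linarith : (0:ℝ) ≤ θ i)]
      have e2 : (|s i| + |M - f i 0| + 1 + μ i / 2) * (θ i) ≤ μ i / 2 * (θ i) ^ 2 := by
        rw [← hmR]; exact e1
      have hint1 : 0 ≤ (|s i| + s i) * (θ i) :=
        mul_nonneg (by linarith [neg_abs_le (s i)]) (by linarith)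
      have hint2 : 0 ≤ (θ i - 1) * (|M - f i 0| + 1 + μ i / 2) :=
        mul_nonneg (by linarith) (by linarith [abs_nonneg (M - f i 0), hμ i])
      nlinarith [hkey, e2, hint1, hint2, le_abs_self (M - f i 0), hμ i]
  have hScpt : IsCompact S := by
    refine IsCompact.of_isClosed_subset (isCompact_univ_pi fun i =>
      isCompact_Icc (a := -(R i)) (b := R i)) hSclosed ?_
    intro θ hθ
    rw [Set.mem_univ_pi]
    exact fun i => hbound θ hθ i
  obtain ⟨θs, hθsS, hminS⟩ := hScpt.exists_isMinOn ⟨0, h0S⟩ hFc.continuousOn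
  have hθsK : Aᵀ.mulVec θs = 0 := hθsS.1
  have hKmin : ∀ θ, Aᵀ.mulVec θ = 0 → F θs ≤ F θ := by
    intro θ hθ
    by_cases hc0 : F θ ≤ F 0
    · exact isMinOn_iff.mp hminS θ ⟨hθ, hc0⟩
    · exact le_trans (isMinOn_iff.mp hminS 0 h0S) (not_le.mp hc0).le
  -- one-sided derivatives at the minimizer
  set a : Fin n → ℝ := fun i => ld (f i) (θs i) with ha
  set b : Fin n → ℝ := fun i => rd (f i) (θs i) with hb
  have hab : ∀ i, a i ≤ b i := fun i => ld_le_rd (hconv i)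
  -- directional optimality
  have Hdir : ∀ d : Fin n → ℝ, Aᵀ.mulVec d = 0 →
      0 ≤ ∑ i, (if 0 ≤ d i then b i else a i) * d i := by
    intro d hd
    have key : ∀ ε : ℝ, 0 < ε →
        0 ≤ (∑ i, (if 0 ≤ d i then b i else a i) * d i) + n * ε := by
      intro ε hε
      rcases Nat.eq_zero_or_pos n with hn | hn
      · subst hn; simp
      choose t ht hq using fun i => q_approx (hconv i) (θs i) (d i) hε
      obtain ⟨j, -, hj⟩ := Finset.exists_min_image Finset.univ t ⟨⟨0, hn⟩, Finset.mem_univ _⟩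
      have hτ0 : 0 < t j := ht j
      have hsum0 : 0 ≤ ∑ i, (f i (θs i + t j * d i) - f i (θs i)) / t j := by
        have hmem : Aᵀ.mulVec (θs + t j • d) = 0 := by
          rw [Matrix.mulVec_add, hθsK, Matrix.mulVec_smul, hd]; simp
        have h1 : F θs ≤ F (θs + t j • d) := hKmin _ hmem
        have h2 : F (θs + t j • d) = ∑ i, f i (θs i + t j * d i) :=
          Finset.sum_congr rfl fun i _ => by simp [Pi.add_apply, Pi.smul_apply, smul_eq_mul]
        rw [← Finset.sum_div]
        apply div_nonneg _ hτ0.le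
        rw [Finset.sum_sub_distrib]
        rw [h2] at h1
        simp only [hF] at h1
        linarith
      have hle : ∀ i, (f i (θs i + t j * d i) - f i (θs i)) / t j
          ≤ (if 0 ≤ d i then b i else a i) * d i + ε := fun i =>
        le_trans (q_mono (hconv i) (θs i) (d i) hτ0 (hj i (Finset.mem_univ i))) (hq i)
      calc (0:ℝ) ≤ ∑ i, (f i (θs i + t j * d i) - f i (θs i)) / t j := hsum0
        _ ≤ ∑ i, ((if 0 ≤ d i then b i else a i) * d i + ε) :=
            Finset.sum_le_sum fun i _ => hle i
        _ = (∑ i, (if 0 ≤ d i then b i else a i) * d i) + n * ε := by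
            rw [Finset.sum_add_distrib, Finset.sum_const, Finset.card_univ, Fintype.card_fin,
              nsmul_eq_mul]
    by_contra hneg
    push_neg at hneg
    have hε : 0 < -(∑ i, (if 0 ≤ d i then b i else a i) * d i) / (n + 1) :=
      div_pos (by linarith) (by positivity)
    have h2 := key _ hε
    have hn1 : (0:ℝ) < (n:ℝ) + 1 := by positivity
    have h3 := mul_nonneg hn1.le h2
    have hid : ((n:ℝ) + 1) * ((∑ i, (if 0 ≤ d i then b i else a i) * d i)
        + n * (-(∑ i, (if 0 ≤ d i then b i else a i) * d i) / (n + 1)))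
        = ∑ i, (if 0 ≤ d i then b i else a i) * d i := by
      field_simp
      ring
    rw [hid] at h3
    linarith
  -- separation: find a subgradient orthogonal to the constraint kernel
  set Bx : Set (EuclideanSpace ℝ (Fin n)) := {g | ∀ i, g i ∈ Set.Icc (a i) (b i)} with hBx
  have hBconv : Convex ℝ Bx := by
    intro x hx y hy p q hp hq hpq i
    have := (convex_Icc (a i) (b i)) (hx i) (hy i) hp hq hpq
    simpa [PiLp.add_apply, PiLp.smul_apply, smul_eq_mul] using this
  have hBcpt : IsCompact Bx := by
    have h1 : IsCompact (Set.pi Set.univ fun i => Set.Icc (a i) (b i)) :=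
      isCompact_univ_pi fun i => isCompact_Icc
    have h2 := h1.image (PiLp.continuousLinearEquiv 2 ℝ (fun _ : Fin n => ℝ)).symm.continuous
    have h3 : Bx = (PiLp.continuousLinearEquiv 2 ℝ (fun _ : Fin n => ℝ)).symm ''
        (Set.pi Set.univ fun i => Set.Icc (a i) (b i)) := by
      ext g
      constructor
      · intro hg
        exact ⟨(PiLp.continuousLinearEquiv 2 ℝ (fun _ : Fin n => ℝ)) g, fun i _ => hg i, by simp⟩
      · rintro ⟨y, hy, rfl⟩ i
        simpa [PiLp.coe_symm_continuousLinearEquiv] using hy i (Set.mem_univ i)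
    rw [h3]; exact h2
  set K' : Submodule ℝ (EuclideanSpace ℝ (Fin n)) :=
    LinearMap.ker ((Aᵀ).mulVecLin ∘ₗ (WithLp.linearEquiv 2 ℝ (Fin n → ℝ)).toLinearMap) with hK'
  have hK'mem : ∀ d : EuclideanSpace ℝ (Fin n),
      d ∈ K' ↔ Aᵀ.mulVec ((WithLp.equiv 2 (Fin n → ℝ)) d) = 0 := by
    intro d
    rw [hK', LinearMap.mem_ker]
    constructor
    · intro h; exact h
    · intro h; exact h
  have Hbox : ∀ d ∈ K', ∃ g ∈ Bx, 0 ≤ @inner ℝ _ _ g d := by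
    intro d hd
    have hd0 : Aᵀ.mulVec ((WithLp.equiv 2 (Fin n → ℝ)) d) = 0 := (hK'mem d).mp hd
    refine ⟨(WithLp.equiv 2 (Fin n → ℝ)).symm
      (fun i => if 0 ≤ ((WithLp.equiv 2 (Fin n → ℝ)) d) i then b i else a i), fun i => ?_, ?_⟩
    · rw [WithLp.equiv_symm_apply, PiLp.toLp_apply]
      by_cases h : 0 ≤ ((WithLp.equiv 2 (Fin n → ℝ)) d) i
      · rw [if_pos h]; exact ⟨hab i, le_refl _⟩
      · rw [if_neg h]; exact ⟨le_refl _, hab i⟩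
    · rw [euc_inner]
      have hh := Hdir ((WithLp.equiv 2 (Fin n → ℝ)) d) hd0
      refine le_trans hh (le_of_eq ?_)
      refine Finset.sum_congr rfl fun i _ => ?_
      rw [WithLp.equiv_symm_apply, PiLp.toLp_apply]
      rfl
  obtain ⟨gE, hgB, hgO⟩ := box_orth Bx hBconv hBcpt K' Hbox
  set g : Fin n → ℝ := (WithLp.equiv 2 (Fin n → ℝ)) gE with hg
  have hgK : ∀ θ : Fin n → ℝ, Aᵀ.mulVec θ = 0 → g ⬝ᵥ θ = 0 := by
    intro θ hθ
    have hw : (WithLp.equiv 2 (Fin n → ℝ)).symm θ ∈ K' := by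
      rw [hK'mem]
      rw [Equiv.apply_symm_apply]
      exact hθ
    have h0 := hgO _ hw
    rw [euc_inner] at h0
    rw [dotProduct, ← h0]
    refine Finset.sum_congr rfl fun i _ => ?_
    rw [WithLp.equiv_symm_apply, PiLp.toLp_apply]
    rfl
  have hsub : ∀ i x, f i (θs i) + g i * (x - θs i) ≤ f i x := by
    intro i x
    have h1 : a i ≤ gE i := (hgB i).1
    have h2 : gE i ≤ b i := (hgB i).2
    exact subgrad (hconv i) h1 h2 x
  obtain ⟨lam0, hlam0⟩ := mem_range_of_orth A g hgK
  have hgdotθs : g ⬝ᵥ θs = 0 := hgK θs hθsK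
  have hdual_i : ∀ i, (⨆ x : ℝ, (A.mulVec lam0 i * x - f i x))
      = g i * θs i - f i (θs i) := by
    intro i
    have hAg : A.mulVec lam0 i = g i := by rw [hlam0]
    rw [show (fun x => A.mulVec lam0 i * x - f i x) = fun x => g i * x - f i x by
      funext x; rw [hAg]]
    apply le_antisymm
    · refine ciSup_le fun x => ?_
      have := hsub i x
      linarith
    · have hBd := conj_bdd (hμ i) (hstrong i) (g i)
      exact le_ciSup hBd (θs i)
  have hP : sInf {v : ℝ | ∃ θ : Fin n → ℝ, Aᵀ.mulVec θ = 0 ∧ v = ∑ i, f i (θ i)} = F θs := by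
    apply IsLeast.csInf_eq
    constructor
    · exact ⟨θs, hθsK, rfl⟩
    · rintro v ⟨θ, hθ, rfl⟩
      exact hKmin θ hθ
  have hD : sInf {v : ℝ | ∃ lam : Fin E → ℝ,
      v = ∑ i, ⨆ x : ℝ, (A.mulVec lam i * x - f i x)} = -(F θs) := by
    apply IsLeast.csInf_eq
    constructor
    · refine ⟨lam0, ?_⟩
      rw [Finset.sum_congr rfl fun i _ => hdual_i i, Finset.sum_sub_distrib]
      have hdd : ∑ i, g i * θs i = 0 := hgdotθs
      rw [hdd, hF]
      ring
    · rintro v ⟨lam, rfl⟩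
      have hge : ∀ i, A.mulVec lam i * θs i - f i (θs i)
          ≤ ⨆ x : ℝ, (A.mulVec lam i * x - f i x) := fun i =>
        le_ciSup (conj_bdd (hμ i) (hstrong i) (A.mulVec lam i)) (θs i)
      have hdot : ∑ i, A.mulVec lam i * θs i = 0 := by
        have hh := dot_transfer A lam θs
        rw [hθsK, dotProduct_zero] at hh
        exact hh
      calc -(F θs) = ∑ i, (A.mulVec lam i * θs i - f i (θs i)) := by
            rw [Finset.sum_sub_distrib, hdot, hF]; ring
        _ ≤ ∑ i, ⨆ x : ℝ, (A.mulVec lam i * x - f i x) :=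
            Finset.sum_le_sum fun i _ => hge i
  rw [hP, hD, neg_neg]
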